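/- There exists a null sequence (a_n) in R^2 such that ∑_{n=1}^∞ |⟨a_n, e⟩| = ∞ for every unit vector e ∈ S^1, yet the achievement set S(a_n) = {∑_{n=1}^∞ ε_n a_n : ε ∈ {-1,1}^N, the series converges} is not all of R^2. -/

import Mathlib

open Filter Finset
open scoped RealInnerProductSpace

noncomputable section
namespace Stmt7Aux

/-- Block boundaries: era `k` occupies indices `[MM k, MM (k+1))`, of size `2^(k*k)`. -/
def MM : ℕ → ℕ := fun K => ∑ j ∈ Finset.range K, 2 ^ (j * j)

lemma MM_zero : MM 0 = 0 := by simp [MM]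

lemma MM_succ (k : ℕ) : MM (k + 1) = MM k + 2 ^ (k * k) := Finset.sum_range_succ _ _

lemma MM_strictMono : StrictMono MM := by
  apply strictMono_nat_of_lt_succ
  intro n
  have h : 0 < 2 ^ (n * n) := pow_pos (by norm_num) _
  rw [MM_succ]; omega

lemma self_le_MM : ∀ k, k ≤ MM k := by
  intro k
  induction k with
  | zero => simp [MM_zero]
  | succ k ih =>
    have h : 0 < 2 ^ (k * k) := pow_pos (by norm_num) _
    rw [MM_succ]; omega

/-- the era of index `n` -/
def kk (n : ℕ) : ℕ := Nat.findGreatest (fun k => MM k ≤ n) n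

lemma MM_kk_le (n : ℕ) : MM (kk n) ≤ n :=
  Nat.findGreatest_spec (P := fun k => MM k ≤ n) (Nat.zero_le n) (by simp [MM_zero])

lemma le_kk {K n : ℕ} (h : MM K ≤ n) : K ≤ kk n :=
  Nat.le_findGreatest (le_trans (self_le_MM K) h) h

lemma kk_eq {k n : ℕ} (h1 : MM k ≤ n) (h2 : n < MM (k + 1)) : kk n = k := by
  have hle := le_kk h1
  by_contra hne
  have hk1 : k + 1 ≤ kk n := by omega
  have h3 := MM_strictMono.monotone hk1
  have h4 := MM_kk_le n
  omega

lemma tendsto_kk : Tendsto kk atTop atTop := by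
  apply tendsto_atTop_atTop.mpr
  intro K
  exact ⟨MM K, fun n hn => le_kk hn⟩

/-- generic block decomposition -/
lemma sum_blocks (g : ℕ → ℝ) (K : ℕ) :
    ∑ n ∈ range (MM K), g n = ∑ k ∈ range K, ∑ n ∈ Ico (MM k) (MM (k + 1)), g n := by
  induction K with
  | zero => simp [MM_zero]
  | succ K ih =>
    rw [sum_range_succ, ← ih]
    simp only [range_eq_Ico]
    exact (Finset.sum_Ico_consecutive g (Nat.zero_le (MM K))
      (MM_strictMono.monotone (Nat.le_succ K))).symm

lemma sum_MM (w h : ℕ → ℝ) (K : ℕ) :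
    ∑ n ∈ range (MM K), w n * h (kk n)
      = ∑ k ∈ range K, (∑ n ∈ Ico (MM k) (MM (k + 1)), w n) * h k := by
  rw [sum_blocks]
  refine Finset.sum_congr rfl ?_
  intro k _
  rw [Finset.sum_mul]
  refine Finset.sum_congr rfl ?_
  intro n hn
  rw [Finset.mem_Ico] at hn
  rw [kk_eq hn.1 hn.2]


def V (k : ℕ) : EuclideanSpace ℝ (Fin 2) :=
  (WithLp.equiv 2 (Fin 2 → ℝ)).symm ![(1/2 : ℝ) ^ k, (1/2 : ℝ) ^ (k * k)]

lemma V_apply0 (k : ℕ) : V k 0 = (1/2 : ℝ) ^ k := rfl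
lemma V_apply1 (k : ℕ) : V k 1 = (1/2 : ℝ) ^ (k * k) := rfl

lemma inner_eq (x y : EuclideanSpace ℝ (Fin 2)) : ⟪x, y⟫ = x 0 * y 0 + x 1 * y 1 := by
  simp [PiLp.inner_apply, Fin.sum_univ_two, RCLike.inner_apply, conj_trivial]; ring

lemma le_mul_self (k : ℕ) : k ≤ k * k := by
  cases k with
  | zero => simp
  | succ m => exact Nat.le_mul_of_pos_right _ (Nat.succ_pos m)

lemma half_pow_le (k : ℕ) : (1/2 : ℝ) ^ (k * k) ≤ (1/2 : ℝ) ^ k :=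
  pow_le_pow_of_le_one (by norm_num) (by norm_num) (le_mul_self k)

lemma norm_V_le (k : ℕ) : ‖V k‖ ≤ 2 * (1/2 : ℝ) ^ k := by
  have h0 : (0:ℝ) ≤ (1/2 : ℝ) ^ k := by positivity
  have h1 : (0:ℝ) ≤ (1/2 : ℝ) ^ (k * k) := by positivity
  have hnorm : ‖V k‖ = Real.sqrt (((1/2:ℝ)^k)^2 + ((1/2:ℝ)^(k*k))^2) := by
    rw [EuclideanSpace.norm_eq, Fin.sum_univ_two, V_apply0, V_apply1,
      Real.norm_eq_abs, Real.norm_eq_abs, abs_of_nonneg h0, abs_of_nonneg h1]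
  rw [hnorm]
  have h2 : ((1/2:ℝ)^k)^2 + ((1/2:ℝ)^(k*k))^2 ≤ ((1/2:ℝ)^k + (1/2:ℝ)^(k*k))^2 := by
    nlinarith [mul_nonneg h0 h1]
  calc Real.sqrt (((1/2:ℝ)^k)^2 + ((1/2:ℝ)^(k*k))^2)
      ≤ Real.sqrt (((1/2:ℝ)^k + (1/2:ℝ)^(k*k))^2) := Real.sqrt_le_sqrt h2
    _ = (1/2:ℝ)^k + (1/2:ℝ)^(k*k) := Real.sqrt_sq (by positivity)
    _ ≤ 2 * (1/2:ℝ)^k := by have := half_pow_le k; linarith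


def aa : ℕ → EuclideanSpace ℝ (Fin 2) := fun n => V (kk n)

lemma tendsto_aa_zero : Tendsto aa atTop (nhds 0) := by
  rw [tendsto_zero_iff_norm_tendsto_zero]
  apply squeeze_zero (fun n => norm_nonneg _) (fun n => norm_V_le (kk n))
  have h2 : Tendsto (fun k : ℕ => 2 * (1/2 : ℝ) ^ k) atTop (nhds 0) := by
    have h := tendsto_pow_atTop_nhds_zero_of_lt_one
      (by norm_num : (0:ℝ) ≤ 1/2) (by norm_num : (1/2:ℝ) < 1)
    simpa using h.const_mul 2
  exact h2.comp tendsto_kk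

lemma two_half (m : ℕ) : (2:ℝ) ^ m * (1/2 : ℝ) ^ m = 1 := by
  rw [← mul_pow]; norm_num

lemma card_Ico_MM (k : ℕ) : (Ico (MM k) (MM (k+1))).card = 2 ^ (k * k) := by
  simp [Nat.card_Ico, MM_succ]

/-- era sums of `|⟪aa n, e⟫|` -/
lemma era_sum_abs (e : EuclideanSpace ℝ (Fin 2)) (K : ℕ) :
    ∑ n ∈ range (MM K), |⟪aa n, e⟫|
      = ∑ k ∈ range K, (2:ℝ) ^ (k*k) * |(1/2:ℝ)^k * e 0 + (1/2:ℝ)^(k*k) * e 1| := by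
  have h : ∀ n, |⟪aa n, e⟫| = (1:ℝ) * (fun k => |(1/2:ℝ)^k * e 0 + (1/2:ℝ)^(k*k) * e 1|) (kk n) := by
    intro n
    simp only [aa, inner_eq, V_apply0, V_apply1, one_mul]
  calc ∑ n ∈ range (MM K), |⟪aa n, e⟫|
      = ∑ n ∈ range (MM K), (1:ℝ) * (fun k => |(1/2:ℝ)^k * e 0 + (1/2:ℝ)^(k*k) * e 1|) (kk n) := by
        exact Finset.sum_congr rfl (fun n _ => h n)
    _ = ∑ k ∈ range K, (∑ n ∈ Ico (MM k) (MM (k+1)), (1:ℝ))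
          * |(1/2:ℝ)^k * e 0 + (1/2:ℝ)^(k*k) * e 1| :=
        sum_MM (fun _ => (1:ℝ)) (fun k => |(1/2:ℝ)^k * e 0 + (1/2:ℝ)^(k*k) * e 1|) K
    _ = ∑ k ∈ range K, (2:ℝ) ^ (k*k) * |(1/2:ℝ)^k * e 0 + (1/2:ℝ)^(k*k) * e 1| := by
        refine Finset.sum_congr rfl (fun k _ => ?_)
        rw [Finset.sum_const, card_Ico_MM]
        norm_num

lemma not_summable_aa (e : EuclideanSpace ℝ (Fin 2)) (he : ‖e‖ = 1) :
    ¬ Summable (fun n => |⟪aa n, e⟫|) := by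
  intro hsum
  set T := ∑' n, |⟪aa n, e⟫| with hT
  have hbound : ∀ K : ℕ,
      ∑ k ∈ range K, (2:ℝ) ^ (k*k) * |(1/2:ℝ)^k * e 0 + (1/2:ℝ)^(k*k) * e 1| ≤ T := by
    intro K
    rw [← era_sum_abs]
    exact Summable.sum_le_tsum _ (fun n _ => abs_nonneg _) hsum
  by_cases hb0 : e 0 = 0
  · -- pure y direction
    have he1 : e 1 ≠ 0 := by
      intro hb1
      have : e = 0 := by
        ext i
        fin_cases i <;> assumption
      rw [this] at he
      simp at he
    have hpos : 0 < |e 1| := abs_pos.mpr he1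
    obtain ⟨K, hK⟩ := exists_nat_gt (T / |e 1|)
    have h1 : ∑ k ∈ range K, (2:ℝ) ^ (k*k) * |(1/2:ℝ)^k * e 0 + (1/2:ℝ)^(k*k) * e 1|
        = (K : ℝ) * |e 1| := by
      rw [Finset.sum_congr rfl (fun k _ => ?_)]
      · rw [Finset.sum_const, card_range, nsmul_eq_mul]
      · rw [hb0, mul_zero, zero_add, abs_mul, abs_pow, abs_of_nonneg (by norm_num : (0:ℝ) ≤ 1/2),
          ← mul_assoc, two_half, one_mul]
    have h2 := hbound K
    rw [h1] at h2
    have h3 : T / |e 1| < K := hK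
    rw [div_lt_iff₀ hpos] at h3
    linarith
  · -- e 0 ≠ 0
    have hpos : 0 < |e 0| := abs_pos.mpr hb0
    obtain ⟨C, hC⟩ := exists_nat_gt ((1 + |e 1|) / |e 0|)
    have hCpos : (1 + |e 1|) < C * |e 0| := by
      rw [div_lt_iff₀ hpos] at hC; linarith
    -- each era k ≥ C+1 contributes at least 1
    have hclaim : ∀ k : ℕ, C + 1 ≤ k →
        1 ≤ (2:ℝ) ^ (k*k) * |(1/2:ℝ)^k * e 0 + (1/2:ℝ)^(k*k) * e 1| := by
      intro k hk
      have hk1 : 1 ≤ k := le_trans (Nat.le_add_left 1 C) hk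
      -- |x+y| ≥ |x| - |y|
      have habs : |(1/2:ℝ)^k * e 0| - |(1/2:ℝ)^(k*k) * e 1|
          ≤ |(1/2:ℝ)^k * e 0 + (1/2:ℝ)^(k*k) * e 1| := by
        have h := abs_add_le ((1/2:ℝ)^k * e 0 + (1/2:ℝ)^(k*k) * e 1) (-((1/2:ℝ)^(k*k) * e 1))
        simp only [add_neg_cancel_right, abs_neg] at h
        linarith
      have hp1 : (0:ℝ) < (2:ℝ)^(k*k) := by positivity
      -- 2^(k*k) * (1/2)^k = 2^(k*k - k)
      have hsub : k ≤ k * k := le_mul_self k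
      have hps : (2:ℝ)^(k*k) * (1/2:ℝ)^k = (2:ℝ)^(k*k - k) := by
        have hh : (2:ℝ)^(k*k-k) * (2:ℝ)^k = (2:ℝ)^(k*k) := by
          rw [← pow_add, Nat.sub_add_cancel hsub]
        rw [← hh, mul_assoc, two_half, mul_one]
      -- 2^(k*k-k) ≥ k (reals)
      have hknat : k ≤ 2 ^ (k * k - k) := by
        have h1' : k - 1 < 2 ^ (k - 1) := Nat.lt_two_pow_self (n := k - 1)
        have h2' : k - 1 ≤ k * k - k := by
          have hmul : (k - 1) * 1 ≤ (k - 1) * k := Nat.mul_le_mul_left _ hk1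
          have hexp : (k - 1) * k = k * k - k := by
            cases k with
            | zero => simp
            | succ m => simp [Nat.succ_sub_one]; ring_nf; omega
          omega
        have h3' : 2 ^ (k - 1) ≤ 2 ^ (k * k - k) := Nat.pow_le_pow_right (by norm_num) h2'
        omega
      have hkreal : (k : ℝ) ≤ (2:ℝ) ^ (k*k - k) := by
        have := (Nat.cast_le (α := ℝ)).mpr hknat
        push_cast at this
        exact this
      have hCk : (C : ℝ) + 1 ≤ (k : ℝ) := by exact_mod_cast hk
      -- putting it together
      have hy : (2:ℝ)^(k*k) * |(1/2:ℝ)^(k*k) * e 1| = |e 1| := by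
        rw [abs_mul, abs_pow, abs_of_nonneg (by norm_num : (0:ℝ) ≤ 1/2), ← mul_assoc,
          two_half, one_mul]
      have hx : (2:ℝ)^(k*k) * |(1/2:ℝ)^k * e 0| = (2:ℝ)^(k*k-k) * |e 0| := by
        rw [abs_mul, abs_pow, abs_of_nonneg (by norm_num : (0:ℝ) ≤ 1/2), ← mul_assoc, hps]
      have hmain : (2:ℝ)^(k*k) * ((1/2:ℝ)^k * |e 0| - (1/2:ℝ)^(k*k) * |e 1|)
          ≤ (2:ℝ) ^ (k*k) * |(1/2:ℝ)^k * e 0 + (1/2:ℝ)^(k*k) * e 1| := by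
        apply mul_le_mul_of_nonneg_left _ (le_of_lt hp1)
        calc (1/2:ℝ)^k * |e 0| - (1/2:ℝ)^(k*k) * |e 1|
            = |(1/2:ℝ)^k * e 0| - |(1/2:ℝ)^(k*k) * e 1| := by
              rw [abs_mul, abs_mul, abs_pow, abs_pow,
                abs_of_nonneg (by norm_num : (0:ℝ) ≤ 1/2)]
          _ ≤ _ := habs
      have hlhs : (2:ℝ)^(k*k-k) * |e 0| - |e 1|
          = (2:ℝ)^(k*k) * ((1/2:ℝ)^k * |e 0| - (1/2:ℝ)^(k*k) * |e 1|) := by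
        rw [mul_sub, ← mul_assoc, ← mul_assoc, hps, two_half, one_mul]
      have hbig : 1 + |e 1| ≤ (2:ℝ)^(k*k-k) * |e 0| := by
        calc 1 + |e 1| ≤ (C:ℝ) * |e 0| := le_of_lt hCpos
          _ ≤ (k:ℝ) * |e 0| := by
              apply mul_le_mul_of_nonneg_right _ (abs_nonneg _)
              linarith
          _ ≤ (2:ℝ)^(k*k-k) * |e 0| := mul_le_mul_of_nonneg_right hkreal (abs_nonneg _)
      linarith
    -- now derive contradiction
    obtain ⟨Kt, hKt⟩ := exists_nat_gt T
    set K := C + 1 + Kt with hKdef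
    have hsubset : Ico (C+1) K ⊆ range K := by
      intro x hx
      rw [Finset.mem_Ico] at hx
      rw [Finset.mem_range]
      exact hx.2
    have hlow : (Kt : ℝ) ≤ ∑ k ∈ range K,
        (2:ℝ) ^ (k*k) * |(1/2:ℝ)^k * e 0 + (1/2:ℝ)^(k*k) * e 1| := by
      have h1 : (Ico (C+1) K).card • (1:ℝ) ≤ ∑ k ∈ Ico (C+1) K,
          (2:ℝ) ^ (k*k) * |(1/2:ℝ)^k * e 0 + (1/2:ℝ)^(k*k) * e 1| :=
        Finset.card_nsmul_le_sum (Ico (C+1) K)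
          (fun k => (2:ℝ) ^ (k*k) * |(1/2:ℝ)^k * e 0 + (1/2:ℝ)^(k*k) * e 1|) 1
          (fun k hk => hclaim k (Finset.mem_Ico.mp hk).1)
      have hcard : (Ico (C+1) K).card = Kt := by
        rw [Nat.card_Ico]; omega
      rw [hcard] at h1
      rw [nsmul_eq_mul, mul_one] at h1
      calc (Kt:ℝ) ≤ ∑ k ∈ Ico (C+1) K, (2:ℝ) ^ (k*k) * |(1/2:ℝ)^k * e 0 + (1/2:ℝ)^(k*k) * e 1| := h1
        _ ≤ ∑ k ∈ range K, (2:ℝ) ^ (k*k) * |(1/2:ℝ)^k * e 0 + (1/2:ℝ)^(k*k) * e 1| := by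
            apply Finset.sum_le_sum_of_subset_of_nonneg hsubset
            intro i _ _
            positivity
    have := hbound K
    linarith

/-! ### Part 3: the point `(0, 1/3)` is not attained -/

def v0 : EuclideanSpace ℝ (Fin 2) := (WithLp.equiv 2 (Fin 2 → ℝ)).symm ![1, 0]
def v1 : EuclideanSpace ℝ (Fin 2) := (WithLp.equiv 2 (Fin 2 → ℝ)).symm ![0, 1]
def x₀ : EuclideanSpace ℝ (Fin 2) := (WithLp.equiv 2 (Fin 2 → ℝ)).symm ![0, 1/3]

lemma v0_apply0 : v0 0 = 1 := rfl
lemma v0_apply1 : v0 1 = 0 := rfl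
lemma v1_apply0 : v1 0 = 0 := rfl
lemma v1_apply1 : v1 1 = 1 := rfl
lemma x₀_apply0 : x₀ 0 = 0 := rfl
lemma x₀_apply1 : x₀ 1 = 1/3 := rfl

lemma inner_aa_v0 (n : ℕ) : ⟪aa n, v0⟫ = (1/2:ℝ)^(kk n) := by
  show ⟪V (kk n), v0⟫ = (1/2:ℝ)^(kk n)
  rw [inner_eq, V_apply0, V_apply1, v0_apply0, v0_apply1]
  ring

lemma inner_aa_v1 (n : ℕ) : ⟪aa n, v1⟫ = (1/2:ℝ)^(kk n * kk n) := by
  show ⟪V (kk n), v1⟫ = (1/2:ℝ)^(kk n * kk n)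
  rw [inner_eq, V_apply0, V_apply1, v1_apply0, v1_apply1]
  ring

lemma inner_x₀_v0 : ⟪x₀, v0⟫ = (0:ℝ) := by
  rw [inner_eq, x₀_apply0, x₀_apply1, v0_apply0, v0_apply1]; ring

lemma inner_x₀_v1 : ⟪x₀, v1⟫ = (1/3:ℝ) := by
  rw [inner_eq, x₀_apply0, x₀_apply1, v1_apply0, v1_apply1]; ring

lemma not_attained (ε : ℕ → ℝ) (hε : ∀ n, ε n = 1 ∨ ε n = -1)
    (hP : Tendsto (fun N => ∑ n ∈ range N, ε n • aa n) atTop (nhds x₀)) : False := by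
  -- x-coordinate limit
  have hX : Tendsto (fun N => ∑ n ∈ range N, ε n * (1/2:ℝ)^(kk n)) atTop (nhds 0) := by
    have h := Filter.Tendsto.inner (𝕜 := ℝ) hP (tendsto_const_nhds (x := v0))
    rw [inner_x₀_v0] at h
    have heq : ∀ N : ℕ, ⟪∑ n ∈ range N, ε n • aa n, v0⟫
        = ∑ n ∈ range N, ε n * (1/2:ℝ)^(kk n) := by
      intro N
      rw [sum_inner]
      exact Finset.sum_congr rfl fun n _ => by
        rw [real_inner_smul_left, inner_aa_v0]
    simpa only [heq] using h
  -- y-coordinate limit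
  have hY : Tendsto (fun N => ∑ n ∈ range N, ε n * (1/2:ℝ)^(kk n * kk n)) atTop (nhds (1/3)) := by
    have h := Filter.Tendsto.inner (𝕜 := ℝ) hP (tendsto_const_nhds (x := v1))
    rw [inner_x₀_v1] at h
    have heq : ∀ N : ℕ, ⟪∑ n ∈ range N, ε n • aa n, v1⟫
        = ∑ n ∈ range N, ε n * (1/2:ℝ)^(kk n * kk n) := by
      intro N
      rw [sum_inner]
      exact Finset.sum_congr rfl fun n _ => by
        rw [real_inner_smul_left, inner_aa_v1]
    simpa only [heq] using h
  -- block net signs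
  set m : ℕ → ℝ := fun k => ∑ n ∈ Ico (MM k) (MM (k+1)), ε n with hm
  set SX : ℕ → ℝ := fun K => ∑ k ∈ range K, m k * (1/2:ℝ)^k with hSXdef
  set SY : ℕ → ℝ := fun K => ∑ k ∈ range K, m k * (1/2:ℝ)^(k*k) with hSYdef
  have hXM : ∀ K : ℕ, ∑ n ∈ range (MM K), ε n * (1/2:ℝ)^(kk n) = SX K :=
    fun K => sum_MM ε (fun k => (1/2:ℝ)^k) K
  have hYM : ∀ K : ℕ, ∑ n ∈ range (MM K), ε n * (1/2:ℝ)^(kk n * kk n) = SY K :=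
    fun K => sum_MM ε (fun k => (1/2:ℝ)^(k*k)) K
  have hSX : Tendsto SX atTop (nhds 0) := by
    have h := hX.comp MM_strictMono.tendsto_atTop
    have hcomp : ((fun N => ∑ n ∈ range N, ε n * (1/2:ℝ)^(kk n)) ∘ MM) = SX :=
      funext fun K => hXM K
    rwa [hcomp] at h
  have hSY : Tendsto SY atTop (nhds (1/3)) := by
    have h := hY.comp MM_strictMono.tendsto_atTop
    have hcomp : ((fun N => ∑ n ∈ range N, ε n * (1/2:ℝ)^(kk n * kk n)) ∘ MM) = SY :=
      funext fun K => hYM K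
    rwa [hcomp] at h
  -- the block x-increments tend to zero
  have hd : Tendsto (fun k => m k * (1/2:ℝ)^k) atTop (nhds 0) := by
    have h1 := (hSX.comp (tendsto_add_atTop_nat 1)).sub hSX
    have h2 : ∀ k : ℕ, SX (k+1) - SX k = m k * (1/2:ℝ)^k := by
      intro k
      rw [hSXdef]
      simp only []
      rw [Finset.sum_range_succ]
      ring
    simp only [Function.comp] at h1
    rw [sub_self] at h1
    simpa only [h2] using h1
  obtain ⟨K₁, hK₁⟩ := Metric.tendsto_atTop.mp hd 1 one_pos
  have hm2 : ∀ k, K₁ ≤ k → |m k| ≤ (2:ℝ)^k := by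
    intro k hk
    have h := hK₁ k hk
    rw [Real.dist_eq, sub_zero, abs_mul, abs_pow,
      abs_of_nonneg (by norm_num : (0:ℝ) ≤ 1/2)] at h
    have hcan : (1/2:ℝ)^k * (2:ℝ)^k = 1 := by rw [mul_comm]; exact two_half k
    have h2 : |m k| * (1/2:ℝ)^k * (2:ℝ)^k ≤ 1 * (2:ℝ)^k :=
      mul_le_mul_of_nonneg_right (le_of_lt h) (by positivity)
    calc |m k| = |m k| * ((1/2:ℝ)^k * (2:ℝ)^k) := by rw [hcan, mul_one]
      _ = |m k| * (1/2:ℝ)^k * (2:ℝ)^k := by ring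
      _ ≤ 1 * (2:ℝ)^k := h2
      _ = (2:ℝ)^k := one_mul _
  -- the key scale
  set K := max K₁ 3 with hKdef
  have hKK₁ : K₁ ≤ K := le_max_left _ _
  have hK3 : 3 ≤ K := le_max_right _ _
  -- tail estimate
  have htail : |1/3 - SY (K+1)| ≤ 2 * (1/2:ℝ)^(K*K + K) := by
    have hb : ∀ J, K + 1 ≤ J → |SY J - SY (K+1)| ≤ 2 * (1/2:ℝ)^(K*K+K) := by
      intro J hJ
      have hs : SY J - SY (K+1) = ∑ k ∈ Ico (K+1) J, m k * (1/2:ℝ)^(k*k) := by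
        rw [hSYdef]
        simp only []
        rw [Finset.sum_Ico_eq_sub _ hJ]
      rw [hs]
      calc |∑ k ∈ Ico (K+1) J, m k * (1/2:ℝ)^(k*k)|
          ≤ ∑ k ∈ Ico (K+1) J, |m k * (1/2:ℝ)^(k*k)| := Finset.abs_sum_le_sum_abs _ _
        _ ≤ ∑ k ∈ Ico (K+1) J, (1/2:ℝ)^(K*K+K) * (1/2:ℝ)^(k - (K+1)) := by
            apply Finset.sum_le_sum
            intro k hk
            obtain ⟨hk1, _⟩ := Finset.mem_Ico.mp hk
            have hkK₁' : K₁ ≤ k := le_trans hKK₁ (le_trans (Nat.le_succ K) hk1)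
            have h1 := hm2 k hkK₁'
            rw [abs_mul, abs_pow, abs_of_nonneg (by norm_num : (0:ℝ) ≤ 1/2)]
            have h2 : |m k| * (1/2:ℝ)^(k*k) ≤ (2:ℝ)^k * (1/2:ℝ)^(k*k) :=
              mul_le_mul_of_nonneg_right h1 (by positivity)
            refine le_trans h2 ?_
            obtain ⟨t, rfl⟩ := Nat.exists_eq_add_of_le hk1
            have hidx : (K+1+t) - (K+1) = t := by omega
            rw [hidx, ← pow_add]
            -- goal : 2^(K+1+t) * (1/2)^((K+1+t)*(K+1+t)) ≤ (1/2)^(K*K+K+t)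
            have hE : (K+1+t) + (K*K + K + t) ≤ (K+1+t)*(K+1+t) := by
              have hid : (K+1+t)*(K+1+t)
                  = ((K+1+t) + (K*K+K+t)) + (K*t + K*t + t*t) := by ring
              rw [hid]
              exact Nat.le_add_right _ _
            have hsplit : (1/2:ℝ)^((K+1+t)*(K+1+t))
                = (1/2:ℝ)^(K+1+t) * (1/2:ℝ)^(K*K+K+t)
                  * (1/2:ℝ)^((K+1+t)*(K+1+t) - ((K+1+t) + (K*K+K+t))) := by
              rw [← pow_add, ← pow_add]
              congr 1
              omega
            rw [hsplit]
            have hc := two_half (K+1+t)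
            have hRle : (1/2:ℝ)^((K+1+t)*(K+1+t) - ((K+1+t) + (K*K+K+t))) ≤ 1 :=
              pow_le_one₀ (by norm_num) (by norm_num)
            have hnn : (0:ℝ) ≤ (1/2:ℝ)^(K*K+K+t) := by positivity
            calc (2:ℝ)^(K+1+t) * ((1/2:ℝ)^(K+1+t) * (1/2:ℝ)^(K*K+K+t)
                  * (1/2:ℝ)^((K+1+t)*(K+1+t) - ((K+1+t) + (K*K+K+t))))
                = ((2:ℝ)^(K+1+t) * (1/2:ℝ)^(K+1+t)) * ((1/2:ℝ)^(K*K+K+t)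
                  * (1/2:ℝ)^((K+1+t)*(K+1+t) - ((K+1+t) + (K*K+K+t)))) := by ring
              _ = (1/2:ℝ)^(K*K+K+t)
                  * (1/2:ℝ)^((K+1+t)*(K+1+t) - ((K+1+t) + (K*K+K+t))) := by rw [hc, one_mul]
              _ ≤ (1/2:ℝ)^(K*K+K+t) * 1 := mul_le_mul_of_nonneg_left hRle hnn
              _ = (1/2:ℝ)^(K*K+K+t) := mul_one _
        _ = (1/2:ℝ)^(K*K+K) * ∑ k ∈ Ico (K+1) J, (1/2:ℝ)^(k-(K+1)) := by
            rw [Finset.mul_sum]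
        _ ≤ (1/2:ℝ)^(K*K+K) * 2 := by
            apply mul_le_mul_of_nonneg_left _ (by positivity)
            rw [Finset.sum_Ico_eq_sum_range]
            have heq2 : ∀ i : ℕ, (K+1+i) - (K+1) = i := fun i => by omega
            calc ∑ i ∈ range (J-(K+1)), (1/2:ℝ)^((K+1+i)-(K+1))
                = ∑ i ∈ range (J-(K+1)), (1/2:ℝ)^i :=
                  Finset.sum_congr rfl fun i _ => by rw [heq2 i]
              _ ≤ 2 := sum_geometric_two_le _
        _ = 2 * (1/2:ℝ)^(K*K+K) := mul_comm _ _
    have hlim : Tendsto (fun J => |SY J - SY (K+1)|) atTop (nhds |1/3 - SY (K+1)|) :=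
      (hSY.sub tendsto_const_nhds).abs
    exact le_of_tendsto hlim (eventually_atTop.mpr ⟨K+1, hb⟩)
  -- integrality
  set ζ : ℕ → ℤ := fun n => if ε n = 1 then 1 else -1 with hζ
  have hζε : ∀ n, ((ζ n : ℤ) : ℝ) = ε n := by
    intro n
    rcases hε n with h | h
    · simp [hζ, h]
    · have hne : ε n ≠ 1 := by rw [h]; norm_num
      show ((if ε n = 1 then (1:ℤ) else -1 : ℤ) : ℝ) = ε n
      rw [if_neg hne, h]
      norm_num
  set mz : ℕ → ℤ := fun k => ∑ n ∈ Ico (MM k) (MM (k+1)), ζ n with hmz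
  have hmzm : ∀ k, ((mz k : ℤ) : ℝ) = m k := by
    intro k
    rw [hmz, hm]
    push_cast
    exact Finset.sum_congr rfl fun n _ => hζε n
  set zz : ℤ := ∑ k ∈ range (K+1), mz k * 2^(K*K - k*k) with hzz
  have hzzr : ((zz : ℤ) : ℝ) = (2:ℝ)^(K*K) * SY (K+1) := by
    rw [hzz, hSYdef]
    simp only []
    push_cast
    rw [Finset.mul_sum]
    refine Finset.sum_congr rfl fun k hk => ?_
    have hkK : k ≤ K := Nat.lt_succ_iff.mp (Finset.mem_range.mp hk)
    have hkk : k*k ≤ K*K := Nat.mul_le_mul hkK hkK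
    have hpows : (2:ℝ)^(K*K) * (1/2:ℝ)^(k*k) = (2:ℝ)^(K*K - k*k) := by
      have hh : (2:ℝ)^(K*K-k*k) * (2:ℝ)^(k*k) = (2:ℝ)^(K*K) := by
        rw [← pow_add, Nat.sub_add_cancel hkk]
      rw [← hh, mul_assoc, two_half, mul_one]
    rw [hmzm k, ← hpows]
    ring
  -- 3 does not divide 2^(K*K)
  have h3 : ¬ ((3:ℤ) ∣ (2:ℤ)^(K*K)) := by
    intro hdvd
    have h1 : (3:ℕ) ∣ 2^(K*K) := by exact_mod_cast hdvd
    have h2 := Nat.Prime.dvd_of_dvd_pow Nat.prime_three h1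
    norm_num at h2
  have hne0 : (2:ℤ)^(K*K) - 3 * zz ≠ 0 := by
    intro h0
    exact h3 ⟨zz, by linarith⟩
  have habs1 : (1:ℝ) ≤ |(2:ℝ)^(K*K) - 3*((zz : ℤ) : ℝ)| := by
    have h := Int.one_le_abs hne0
    have h2 : ((|((2:ℤ)^(K*K) - 3 * zz)| : ℤ) : ℝ) = |(2:ℝ)^(K*K) - 3*((zz : ℤ) : ℝ)| := by
      push_cast
      ring_nf
    exact_mod_cast (by exact_mod_cast h : ((1:ℤ):ℝ) ≤ ((|((2:ℤ)^(K*K) - 3 * zz)| : ℤ) : ℝ)) |>.trans_eq h2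
  -- combine
  have hfin1 : (1:ℝ)/3 ≤ |(2:ℝ)^(K*K) * (1/3 - SY (K+1))| := by
    have heq3 : (2:ℝ)^(K*K) * (1/3 - SY (K+1)) = ((2:ℝ)^(K*K) - 3*((zz : ℤ) : ℝ))/3 := by
      rw [hzzr]; ring
    rw [heq3, abs_div, abs_of_pos (by norm_num : (0:ℝ) < 3)]
    linarith
  have hfin2 : |(2:ℝ)^(K*K) * (1/3 - SY (K+1))| ≤ 2 * (1/2:ℝ)^K := by
    rw [abs_mul, abs_of_pos (by positivity : (0:ℝ) < (2:ℝ)^(K*K))]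
    calc (2:ℝ)^(K*K) * |1/3 - SY (K+1)|
        ≤ (2:ℝ)^(K*K) * (2 * (1/2:ℝ)^(K*K+K)) :=
          mul_le_mul_of_nonneg_left htail (by positivity)
      _ = 2 * (1/2:ℝ)^K := by
          rw [pow_add]
          calc (2:ℝ)^(K*K) * (2*((1/2:ℝ)^(K*K) * (1/2:ℝ)^K))
              = 2 * (((2:ℝ)^(K*K)*(1/2:ℝ)^(K*K)) * (1/2:ℝ)^K) := by ring
            _ = 2 * (1/2:ℝ)^K := by rw [two_half, one_mul]
  have hKp : (1/2:ℝ)^K ≤ (1/2:ℝ)^3 :=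
    pow_le_pow_of_le_one (by norm_num) (by norm_num) hK3
  have : (1:ℝ)/3 ≤ 2 * (1/2:ℝ)^3 := by
    calc (1:ℝ)/3 ≤ |(2:ℝ)^(K*K) * (1/3 - SY (K+1))| := hfin1
      _ ≤ 2 * (1/2:ℝ)^K := hfin2
      _ ≤ 2 * (1/2:ℝ)^3 := by linarith
  norm_num at this

end Stmt7Aux
end

/-- There is a null sequence `(aₙ)` in `ℝ²` satisfying the Lévy–Steinitz condition
(`∑ |⟨aₙ, e⟩| = ∞` for every unit vector `e`) whose achievement set of signed sums
is not all of `ℝ²`. -/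
theorem stmt7 :
    ∃ a : ℕ → EuclideanSpace ℝ (Fin 2),
      Tendsto a atTop (nhds 0) ∧
      (∀ e : EuclideanSpace ℝ (Fin 2), ‖e‖ = 1 → ¬ Summable (fun n => |⟪a n, e⟫|)) ∧
      {x : EuclideanSpace ℝ (Fin 2) | ∃ ε : ℕ → ℝ, (∀ n, ε n = 1 ∨ ε n = -1) ∧
        Tendsto (fun N => ∑ n ∈ Finset.range N, ε n • a n) atTop (nhds x)} ≠ Set.univ := by
  refine ⟨Stmt7Aux.aa, Stmt7Aux.tendsto_aa_zero, Stmt7Aux.not_summable_aa, ?_⟩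
  intro h
  have hx : Stmt7Aux.x₀ ∈ {x : EuclideanSpace ℝ (Fin 2) | ∃ ε : ℕ → ℝ,
      (∀ n, ε n = 1 ∨ ε n = -1) ∧
      Tendsto (fun N => ∑ n ∈ Finset.range N, ε n • Stmt7Aux.aa n) atTop (nhds x)} := by
    rw [h]; exact Set.mem_univ _
  obtain ⟨ε, hε, hP⟩ := hx
  exact Stmt7Aux.not_attained ε hε hP
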